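/- Let ρ̂ = {ρ_n} be a sequence of density operators and σ̂ = {σ_n} a sequence of positive semidefinite Hermitian operators. For every ε ∈ [0,1], the quantities D̄(ε|ρ̂‖σ̂) := inf{a : limsup_n Tr ρ_n {ρ_n − e^{na}σ_n > 0} ≤ ε} and C̄(ε|ρ̂‖σ̂) := inf{a : limsup_n Tr(ρ_n − e^{na}σ_n)₊ ≤ ε} coincide: D̄(ε|ρ̂‖σ̂) = C̄(ε|ρ̂‖σ̂). -/

import Mathlib

open Matrix
open scoped ComplexOrder

open Classical in
/-- The positive part `A₊` of a Hermitian matrix `A`, defined via the spectral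
decomposition (and `0` if `A` is not Hermitian). -/
noncomputable def posPartOf {n : Type*} [Fintype n] [DecidableEq n] (A : Matrix n n ℂ) :
    Matrix n n ℂ :=
  if hA : A.IsHermitian then
    (hA.eigenvectorUnitary : Matrix n n ℂ) *
      Matrix.diagonal (fun i => ((max (hA.eigenvalues i) 0 : ℝ) : ℂ)) *
      (star (hA.eigenvectorUnitary : Matrix n n ℂ))
  else 0

open Classical in
/-- The negative part `A₋` of a Hermitian matrix `A` (so that `A = A₊ - A₋`). -/
noncomputable def negPartOf {n : Type*} [Fintype n] [DecidableEq n] (A : Matrix n n ℂ) :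
    Matrix n n ℂ :=
  if hA : A.IsHermitian then
    (hA.eigenvectorUnitary : Matrix n n ℂ) *
      Matrix.diagonal (fun i => ((max (-(hA.eigenvalues i)) 0 : ℝ) : ℂ)) *
      (star (hA.eigenvectorUnitary : Matrix n n ℂ))
  else 0

open Classical in
/-- The spectral projection `{A > 0}` onto the strictly positive eigenspaces of a
Hermitian matrix `A` (and `0` if `A` is not Hermitian). -/
noncomputable def posProjOf {n : Type*} [Fintype n] [DecidableEq n] (A : Matrix n n ℂ) :
    Matrix n n ℂ :=
  if hA : A.IsHermitian then
    (hA.eigenvectorUnitary : Matrix n n ℂ) *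
      Matrix.diagonal (fun i => if 0 < hA.eigenvalues i then (1 : ℂ) else 0) *
      (star (hA.eigenvectorUnitary : Matrix n n ℂ))
  else 0

open Classical in
/-- The trace norm of a Hermitian matrix: the sum of absolute values of eigenvalues. -/
noncomputable def traceNormOf {n : Type*} [Fintype n] [DecidableEq n] (A : Matrix n n ℂ) : ℝ :=
  if hA : A.IsHermitian then ∑ i, |hA.eigenvalues i| else 0
/-- The spectral divergence rate `D̲(ε|ρ̂‖σ̂)`. -/
noncomputable def Dlow {ι : ℕ → Type*} [∀ n, Fintype (ι n)] [∀ n, DecidableEq (ι n)]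
    (ε : ℝ) (ρ σ : ∀ n, Matrix (ι n) (ι n) ℂ) : ℝ :=
  sSup {a : ℝ | 1 - ε ≤
    Filter.liminf (fun n : ℕ =>
      ((ρ n * posProjOf (ρ n - Real.exp (n * a) • σ n)).trace).re) Filter.atTop}

/-- The spectral divergence rate `D̄(ε|ρ̂‖σ̂)`. -/
noncomputable def Dhigh {ι : ℕ → Type*} [∀ n, Fintype (ι n)] [∀ n, DecidableEq (ι n)]
    (ε : ℝ) (ρ σ : ∀ n, Matrix (ι n) (ι n) ℂ) : ℝ :=
  sInf {a : ℝ |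
    Filter.limsup (fun n : ℕ =>
      ((ρ n * posProjOf (ρ n - Real.exp (n * a) • σ n)).trace).re) Filter.atTop ≤ ε}
/-- The alternative spectral divergence rate `C̄(ε|ρ̂‖σ̂)` of Bowen–Datta, via positive parts. -/
noncomputable def Chigh {ι : ℕ → Type*} [∀ n, Fintype (ι n)] [∀ n, DecidableEq (ι n)]
    (ε : ℝ) (ρ σ : ∀ n, Matrix (ι n) (ι n) ℂ) : ℝ :=
  sInf {a : ℝ |
    Filter.limsup (fun n : ℕ =>
      ((posPartOf (ρ n - Real.exp (n * a) • σ n)).trace).re) Filter.atTop ≤ ε}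


namespace DCaux
variable {n : Type*} [Fintype n] [DecidableEq n]

noncomputable def spec {A : Matrix n n ℂ} (hA : A.IsHermitian) (f : n → ℝ) : Matrix n n ℂ :=
  (hA.eigenvectorUnitary : Matrix n n ℂ) * Matrix.diagonal (fun i => (f i : ℂ)) *
    star (hA.eigenvectorUnitary : Matrix n n ℂ)

variable {A : Matrix n n ℂ} (hA : A.IsHermitian)

lemma star_mul_self_eigen : star (hA.eigenvectorUnitary : Matrix n n ℂ) *
    (hA.eigenvectorUnitary : Matrix n n ℂ) = 1 :=
  Matrix.mem_unitaryGroup_iff'.mp hA.eigenvectorUnitary.2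

lemma spec_mul_spec (f g : n → ℝ) : spec hA f * spec hA g = spec hA (fun i => f i * g i) := by
  simp only [spec, Matrix.mul_assoc]
  rw [← Matrix.mul_assoc (star _), star_mul_self_eigen hA, Matrix.one_mul,
    ← Matrix.mul_assoc (Matrix.diagonal _), Matrix.diagonal_mul_diagonal]
  push_cast
  rfl

lemma spec_sub (f g : n → ℝ) : spec hA f - spec hA g = spec hA (fun i => f i - g i) := by
  have : (Matrix.diagonal fun i => ((f i - g i : ℝ) : ℂ)) =
      Matrix.diagonal (fun i => ((f i : ℝ) : ℂ)) - Matrix.diagonal (fun i => ((g i : ℝ) : ℂ)) := by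
    ext i j
    by_cases h : i = j <;> simp [Matrix.diagonal_apply, h]
  simp only [spec, this, Matrix.sub_mul, Matrix.mul_sub]

lemma spec_one : spec hA (fun _ => 1) = 1 := by
  simp only [spec, Complex.ofReal_one, Matrix.diagonal_one, Matrix.mul_one]
  exact Matrix.mem_unitaryGroup_iff.mp hA.eigenvectorUnitary.2

lemma trace_spec (f : n → ℝ) : (spec hA f).trace = ((∑ i, f i : ℝ) : ℂ) := by
  rw [spec, Matrix.trace_mul_cycle, star_mul_self_eigen hA,
    Matrix.one_mul, Matrix.trace_diagonal]
  push_cast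
  rfl

lemma spec_posSemidef {f : n → ℝ} (hf : ∀ i, 0 ≤ f i) : (spec hA f).PosSemidef := by
  have hd : (Matrix.diagonal (fun i => ((f i : ℝ) : ℂ))).PosSemidef := by
    rw [Matrix.posSemidef_diagonal_iff]
    intro i
    exact_mod_cast Complex.zero_le_real.mpr (hf i)
  have := hd.mul_mul_conjTranspose_same (hA.eigenvectorUnitary : Matrix n n ℂ)
  rw [spec]
  simpa [Matrix.star_eq_conjTranspose, Matrix.mul_assoc] using this

lemma spec_eigenvalues : spec hA hA.eigenvalues = A := by
  conv_rhs => rw [hA.spectral_theorem]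
  rfl

end DCaux

namespace DCaux2
open DCaux
variable {n : Type*} [Fintype n] [DecidableEq n]

lemma trace_re_nonneg {C : Matrix n n ℂ} (hC : C.PosSemidef) : 0 ≤ C.trace.re := by
  rw [← spec_eigenvalues hC.1, trace_spec]
  simp only [Complex.ofReal_re]
  exact Finset.sum_nonneg fun i _ => hC.eigenvalues_nonneg i

lemma trace_mul_re_nonneg {B C : Matrix n n ℂ} (hB : B.PosSemidef) (hC : C.PosSemidef) :
    0 ≤ (B * C).trace.re := by
  have hS : ∃ S : Matrix n n ℂ, S.PosSemidef ∧ S * S = B := by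
    refine ⟨spec hB.1 (fun i => Real.sqrt (hB.1.eigenvalues i)),
      spec_posSemidef hB.1 fun i => Real.sqrt_nonneg _, ?_⟩
    rw [spec_mul_spec]
    conv_rhs => rw [← spec_eigenvalues hB.1]
    congr 1; funext i; exact Real.mul_self_sqrt (hB.eigenvalues_nonneg i)
  obtain ⟨S, hSpsd, hSS⟩ := hS
  have h1 : B * C = S * S * C := by rw [hSS]
  have h2 : (S * C * S).trace = (S * S * C).trace :=
    Matrix.trace_mul_cycle S C S
  have h3 : (S * C * S).PosSemidef := by
    have := hC.mul_mul_conjTranspose_same S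
    rwa [hSpsd.1.eq] at this
  rw [h1, ← h2]; exact trace_re_nonneg h3

lemma posPartOf_eq {A : Matrix n n ℂ} (hA : A.IsHermitian) :
    posPartOf A = spec hA (fun i => max (hA.eigenvalues i) 0) := by
  rw [posPartOf, dif_pos hA]; rfl

lemma negPartOf_eq {A : Matrix n n ℂ} (hA : A.IsHermitian) :
    negPartOf A = spec hA (fun i => max (-(hA.eigenvalues i)) 0) := by
  rw [negPartOf, dif_pos hA]; rfl

lemma posProjOf_eq {A : Matrix n n ℂ} (hA : A.IsHermitian) :
    posProjOf A = spec hA (fun i => if 0 < hA.eigenvalues i then 1 else 0) := by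
  have h : (fun i => if 0 < hA.eigenvalues i then (1 : ℂ) else 0) =
      (fun i => ((if 0 < hA.eigenvalues i then (1 : ℝ) else 0 : ℝ) : ℂ)) := by
    funext i; split <;> simp
  rw [posProjOf, dif_pos hA, spec, h]

lemma posPart_sub_negPart {A : Matrix n n ℂ} (hA : A.IsHermitian) :
    posPartOf A - negPartOf A = A := by
  rw [posPartOf_eq hA, negPartOf_eq hA, spec_sub]
  have h : (fun i => max (hA.eigenvalues i) 0 - max (-(hA.eigenvalues i)) 0) =
      hA.eigenvalues := by
    funext i
    exact max_zero_sub_max_neg_zero_eq_self _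
  rw [h, spec_eigenvalues]

lemma mul_posProj {A : Matrix n n ℂ} (hA : A.IsHermitian) :
    A * posProjOf A = posPartOf A := by
  have h0 : A * posProjOf A = spec hA hA.eigenvalues *
      spec hA (fun i => if 0 < hA.eigenvalues i then 1 else 0) := by
    rw [spec_eigenvalues hA, posProjOf_eq hA]
  rw [h0, spec_mul_spec, posPartOf_eq hA]
  have h1 : (fun i => hA.eigenvalues i * (if 0 < hA.eigenvalues i then 1 else 0)) =
      (fun i => max (hA.eigenvalues i) 0) := by
    funext i
    by_cases h : 0 < hA.eigenvalues i
    · rw [if_pos h, mul_one, max_eq_left h.le]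
    · rw [if_neg h, mul_zero, max_eq_right (not_lt.mp h)]
  rw [h1]

lemma posProj_posSemidef {A : Matrix n n ℂ} (hA : A.IsHermitian) :
    (posProjOf A).PosSemidef := by
  rw [posProjOf_eq hA]
  exact spec_posSemidef hA fun i => by split <;> norm_num

lemma posPart_posSemidef {A : Matrix n n ℂ} (hA : A.IsHermitian) :
    (posPartOf A).PosSemidef := by
  rw [posPartOf_eq hA]
  exact spec_posSemidef hA fun i => le_max_right _ _

lemma negPart_posSemidef {A : Matrix n n ℂ} (hA : A.IsHermitian) :
    (negPartOf A).PosSemidef := by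
  rw [negPartOf_eq hA]
  exact spec_posSemidef hA fun i => le_max_right _ _

lemma one_sub_posProj_posSemidef {A : Matrix n n ℂ} (hA : A.IsHermitian) :
    ((1 : Matrix n n ℂ) - posProjOf A).PosSemidef := by
  rw [posProjOf_eq hA, ← spec_one hA, spec_sub]
  exact spec_posSemidef hA fun i => by split <;> norm_num

lemma trace_posPart_nonneg {A : Matrix n n ℂ} (hA : A.IsHermitian) :
    0 ≤ (posPartOf A).trace.re :=
  trace_re_nonneg (posPart_posSemidef hA)

/-- For PSD `B`, `Re Tr (B * P) ≤ Re Tr B` when `1 - P` is PSD. -/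
lemma trace_mul_le_trace {B P : Matrix n n ℂ} (hB : B.PosSemidef)
    (hP : ((1 : Matrix n n ℂ) - P).PosSemidef) : (B * P).trace.re ≤ B.trace.re := by
  have h : B = B * P + B * (1 - P) := by
    rw [Matrix.mul_sub, Matrix.mul_one]; abel
  have h2 : B.trace.re = (B * P).trace.re + (B * (1 - P)).trace.re := by
    conv_lhs => rw [h]
    rw [Matrix.trace_add, Complex.add_re]
  rw [h2]
  linarith [trace_mul_re_nonneg hB hP]


lemma herm_sub_smul {ρ σ : Matrix n n ℂ} (hρ : ρ.IsHermitian) (hσ : σ.IsHermitian) (c : ℝ) :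
    (ρ - c • σ).IsHermitian := by
  apply hρ.sub
  unfold Matrix.IsHermitian at hσ ⊢
  rw [Matrix.conjTranspose_smul, star_trivial, hσ]

lemma trace_rho_mul_split (ρ σ P : Matrix n n ℂ) (c : ℝ) :
    (ρ * P).trace.re = ((ρ - c • σ) * P).trace.re + c * (σ * P).trace.re := by
  have h : ρ * P = (ρ - c • σ) * P + c • (σ * P) := by
    rw [Matrix.sub_mul, Matrix.smul_mul]; abel
  rw [h, Matrix.trace_add, Matrix.trace_smul, Complex.add_re]
  simp [Complex.real_smul]

lemma lemI {ρ σ : Matrix n n ℂ} (hρ : ρ.PosSemidef) (hσ : σ.PosSemidef) {c : ℝ} (hc : 0 < c) :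
    (posPartOf (ρ - c • σ)).trace.re ≤ (ρ * posProjOf (ρ - c • σ)).trace.re := by
  have hA : (ρ - c • σ).IsHermitian := herm_sub_smul hρ.1 hσ.1 c
  rw [trace_rho_mul_split ρ σ _ c, mul_posProj hA]
  have h1 : 0 ≤ (σ * posProjOf (ρ - c • σ)).trace.re :=
    trace_mul_re_nonneg hσ (posProj_posSemidef hA)
  nlinarith

lemma trace_rho_proj_le_one {ρ : Matrix n n ℂ} (hρ : ρ.PosSemidef) (htr : ρ.trace = 1)
    {P : Matrix n n ℂ} (hP : ((1 : Matrix n n ℂ) - P).PosSemidef) : (ρ * P).trace.re ≤ 1 := by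
  have h := trace_mul_le_trace hρ hP
  rw [htr] at h
  simpa using h

lemma lemII {ρ σ : Matrix n n ℂ} (hρ : ρ.PosSemidef) (htr : ρ.trace = 1) (hσ : σ.PosSemidef)
    {c c' : ℝ} (hc : 0 < c) (hcc : c ≤ c') :
    (ρ * posProjOf (ρ - c' • σ)).trace.re ≤ (posPartOf (ρ - c • σ)).trace.re + c / c' := by
  have hc' : 0 < c' := lt_of_lt_of_le hc hcc
  have hA : (ρ - c • σ).IsHermitian := herm_sub_smul hρ.1 hσ.1 c
  have hA' : (ρ - c' • σ).IsHermitian := herm_sub_smul hρ.1 hσ.1 c'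
  set P' := posProjOf (ρ - c' • σ) with hP'def
  have hP'psd := posProj_posSemidef hA'
  have hP'c := one_sub_posProj_posSemidef hA'
  have step1 : ((ρ - c • σ) * P').trace.re ≤ (posPartOf (ρ - c • σ)).trace.re := by
    have hsplit : (ρ - c • σ) * P'
        = posPartOf (ρ - c • σ) * P' - negPartOf (ρ - c • σ) * P' := by
      rw [← Matrix.sub_mul, posPart_sub_negPart hA]
    have e1 : ((ρ - c • σ) * P').trace.re
        = (posPartOf (ρ - c • σ) * P').trace.re - (negPartOf (ρ - c • σ) * P').trace.re := by
      rw [hsplit, Matrix.trace_sub, Complex.sub_re]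
    have e2 : (posPartOf (ρ - c • σ) * P').trace.re ≤ (posPartOf (ρ - c • σ)).trace.re :=
      trace_mul_le_trace (posPart_posSemidef hA) hP'c
    have e3 : 0 ≤ (negPartOf (ρ - c • σ) * P').trace.re :=
      trace_mul_re_nonneg (negPart_posSemidef hA) hP'psd
    linarith
  have step2 : c' * (σ * P').trace.re ≤ 1 := by
    have h1 : (ρ * P').trace.re = ((ρ - c' • σ) * P').trace.re + c' * (σ * P').trace.re :=
      trace_rho_mul_split ρ σ P' c'
    have h2 : 0 ≤ ((ρ - c' • σ) * P').trace.re := by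
      rw [hP'def, mul_posProj hA']
      exact trace_posPart_nonneg hA'
    have h3 : (ρ * P').trace.re ≤ 1 := trace_rho_proj_le_one hρ htr hP'c
    linarith
  have hσP : 0 ≤ (σ * P').trace.re := trace_mul_re_nonneg hσ hP'psd
  have hsplit : (ρ * P').trace.re = ((ρ - c • σ) * P').trace.re + c * (σ * P').trace.re :=
    trace_rho_mul_split ρ σ P' c
  have key : c * (σ * P').trace.re ≤ c / c' := by
    have h4 : c * (σ * P').trace.re = (c / c') * (c' * (σ * P').trace.re) := by
      field_simp
    rw [h4]
    have h5 : (c / c') * (c' * (σ * P').trace.re) ≤ (c / c') * 1 :=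
      mul_le_mul_of_nonneg_left step2 (by positivity)
    simpa using h5
  linarith

end DCaux2


/-- For sequences of density operators `ρ̂` and positive semidefinite operators `σ̂`,
`D̄(ε|ρ̂‖σ̂) = C̄(ε|ρ̂‖σ̂)` for every `ε ∈ [0,1]`. -/
theorem Dhigh_eq_Chigh {ι : ℕ → Type*} [∀ n, Fintype (ι n)] [∀ n, DecidableEq (ι n)]
    (ρ σ : ∀ n, Matrix (ι n) (ι n) ℂ)
    (hρ : ∀ n, (ρ n).PosSemidef) (hρtr : ∀ n, (ρ n).trace = 1)
    (hσ : ∀ n, (σ n).PosSemidef)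
    (ε : ℝ) (hε : ε ∈ Set.Icc (0 : ℝ) 1) :
    Dhigh ε ρ σ = Chigh ε ρ σ := by
  classical
  obtain ⟨hε0, hε1⟩ := hε
  let f : ℝ → ℕ → ℝ := fun a n =>
    ((ρ n * posProjOf (ρ n - Real.exp (n * a) • σ n)).trace).re
  let g : ℝ → ℕ → ℝ := fun a n =>
    ((posPartOf (ρ n - Real.exp (n * a) • σ n)).trace).re
  have hHerm : ∀ (a : ℝ) (n : ℕ), (ρ n - Real.exp (n * a) • σ n).IsHermitian :=
    fun a n => DCaux2.herm_sub_smul (hρ n).1 (hσ n).1 _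
  have hgf : ∀ a n, g a n ≤ f a n := fun a n =>
    DCaux2.lemI (hρ n) (hσ n) (Real.exp_pos _)
  have hg0 : ∀ a n, 0 ≤ g a n := fun a n => DCaux2.trace_posPart_nonneg (hHerm a n)
  have hf1 : ∀ a n, f a n ≤ 1 := fun a n =>
    DCaux2.trace_rho_proj_le_one (hρ n) (hρtr n)
      (DCaux2.one_sub_posProj_posSemidef (hHerm a n))
  have hf0 : ∀ a n, 0 ≤ f a n := fun a n =>
    DCaux2.trace_mul_re_nonneg (hρ n) (DCaux2.posProj_posSemidef (hHerm a n))
  have hg1 : ∀ a n, g a n ≤ 1 := fun a n => le_trans (hgf a n) (hf1 a n)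
  let D : Set ℝ := {a | Filter.limsup (f a) Filter.atTop ≤ ε}
  let C : Set ℝ := {a | Filter.limsup (g a) Filter.atTop ≤ ε}
  have hDdef : Dhigh ε ρ σ = sInf D := rfl
  have hCdef : Chigh ε ρ σ = sInf C := rfl
  have hDC : D ⊆ C := by
    intro a ha
    refine le_trans (Filter.limsup_le_limsup (Filter.Eventually.of_forall (hgf a)) ?_ ?_) ha
    · exact (Filter.isBoundedUnder_of ⟨0, hg0 a⟩ :
        Filter.IsBoundedUnder (· ≥ ·) _ _).isCoboundedUnder_le
    · exact Filter.isBoundedUnder_of ⟨1, hf1 a⟩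
  have hCD : ∀ a ∈ C, ∀ δ : ℝ, 0 < δ → a + δ ∈ D := by
    intro a ha δ hδ
    have hfg : ∀ n : ℕ, f (a + δ) n ≤ g a n + Real.exp (-δ) ^ n := by
      intro n
      have hcc : Real.exp ((n : ℝ) * a) ≤ Real.exp ((n : ℝ) * (a + δ)) :=
        Real.exp_le_exp.mpr (by nlinarith [Nat.cast_nonneg (α := ℝ) n])
      have h := DCaux2.lemII (hρ n) (hρtr n) (hσ n) (Real.exp_pos ((n : ℝ) * a)) hcc
      have hdiv : Real.exp ((n : ℝ) * a) / Real.exp ((n : ℝ) * (a + δ))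
          = Real.exp (-δ) ^ n := by
        rw [← Real.exp_sub, ← Real.exp_nat_mul]
        congr 1
        ring
      rw [hdiv] at h
      exact h
    show Filter.limsup (f (a + δ)) Filter.atTop ≤ ε
    refine le_of_forall_pos_le_add fun η hη => ?_
    have hbg : Filter.IsBoundedUnder (· ≤ ·) Filter.atTop (g a) :=
      Filter.isBoundedUnder_of ⟨1, hg1 a⟩
    have ev1 : ∀ᶠ n in Filter.atTop, g a n < ε + η / 2 :=
      Filter.eventually_lt_of_limsup_lt (lt_of_le_of_lt ha (by linarith)) hbg
    have ev2 : ∀ᶠ n in Filter.atTop, Real.exp (-δ) ^ n < η / 2 := by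
      have h1 : Real.exp (-δ) < 1 := by
        rw [← Real.exp_zero]
        exact Real.exp_lt_exp.mpr (by linarith)
      exact (tendsto_pow_atTop_nhds_zero_of_lt_one
        (Real.exp_pos _).le h1).eventually_lt_const (by linarith)
    refine Filter.limsup_le_of_le
      ((Filter.isBoundedUnder_of ⟨0, hf0 (a + δ)⟩ :
        Filter.IsBoundedUnder (· ≥ ·) _ _).isCoboundedUnder_le) ?_
    filter_upwards [ev1, ev2] with n h1 h2
    have h3 := hfg n
    linarith
  rw [hDdef, hCdef]
  by_cases hCne : C.Nonempty
  · by_cases hCbdd : BddBelow C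
    · have hDbdd : BddBelow D := hCbdd.mono hDC
      obtain ⟨a0, ha0⟩ := hCne
      have hDne : D.Nonempty := ⟨a0 + 1, hCD a0 ha0 1 one_pos⟩
      apply le_antisymm
      · apply le_csInf ⟨a0, ha0⟩
        intro a ha
        refine le_of_forall_pos_le_add fun δ hδ => ?_
        exact csInf_le hDbdd (hCD a ha δ hδ)
      · exact csInf_le_csInf hCbdd hDne hDC
    · have hDnb : ¬ BddBelow D := by
        rintro ⟨m, hm⟩
        apply hCbdd
        refine ⟨m - 1, fun a ha => ?_⟩
        have h := hm (hCD a ha 1 one_pos)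
        linarith
      rw [Real.sInf_of_not_bddBelow hDnb, Real.sInf_of_not_bddBelow hCbdd]
  · rw [Set.not_nonempty_iff_eq_empty] at hCne
    have hDe : D = ∅ := Set.subset_eq_empty hDC hCne
    rw [hDe, hCne]
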